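/- Let K be a field of characteristic zero with two ring automorphisms σ and τ, and suppose ω, i ∈ K satisfy ω² = 3, i² = −1, σ(ω) = −ω, σ(i) = i, τ(ω) = ω, τ(i) = −i. Set ε = (−1 + ω·i)/2, a primitive cube root of unity in K. Extend σ and τ coefficientwise to the formal power series ring K[[q]]. Suppose given, indexed by the subsets J ⊆ {1,2}, units Y_J, Z_J ∈ K[[q]] and power series S_J ∈ K[[q]] with zero constant term, such that for each of the three families L ∈ {Y, Z, S}: σ(L_∅) = L_{{1,2}}, σ(L_{{1,2}}) = L_∅, σ(L_{{1}}) = L_{{2}}, σ(L_{{2}}) = L_{{1}}, τ(L_∅) = L_∅, τ(L_{{1,2}}) = L_{{1,2}}, τ(L_{{1}}) = L_{{2}}, τ(L_{{2}}) = L_{{1}}. Then for all integers χ, d, e, k, l, the power series Φ₀ = Σ_{J ⊆ {1,2}} (−1)^{|J|·χ} · ε^{(Σ_{j∈J} j)·d} · Y_J^{e} · Z_J^{k} · exp(l·S_J) ∈ K[[q]] satisfies σ(Φ₀) = Φ₀ and τ(Φ₀) = Φ₀. In particular, if every element of K fixed by both σ and τ lies in the prime field ℚ, then all coefficients of Φ₀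 are rational. -/

import Mathlib

open PowerSeries

/-- Composition (substitution) `f(g)` of formal power series, correct whenever the
constant term of `g` vanishes. -/
noncomputable def pcomp {K : Type*} [CommRing K] (f g : PowerSeries K) : PowerSeries K :=
  PowerSeries.mk fun n => ∑ k ∈ Finset.range (n + 1), coeff k f * coeff n (g ^ k)

/-- Formal exponential `exp(g)` of a power series `g` with zero constant term. -/
noncomputable def pexp {K : Type*} [Field K] [CharZero K] (g : PowerSeries K) :
    PowerSeries K :=
  pcomp (PowerSeries.exp K) g

/-- The universal `J`-sum `Φ₀ = Σ_{J ⊆ {1,2}} (-1)^{|J|χ} ε^{‖J‖d} Y_J^e Z_J^k exp(l·S_J)`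
of the rank-3 virtual Segre formula. -/
noncomputable def Phi3 {K : Type*} [Field K] [CharZero K] (ε : K)
    (Y Z : Finset ℕ → (PowerSeries K)ˣ) (S : Finset ℕ → PowerSeries K)
    (χ d e k l : ℤ) : PowerSeries K :=
  ∑ J ∈ ({1, 2} : Finset ℕ).powerset,
    C ((-1 : K) ^ ((J.card : ℤ) * χ) * ε ^ (((J.sum id : ℕ) : ℤ) * d)) *
      ((Y J ^ e : (PowerSeries K)ˣ) : PowerSeries K) *
      ((Z J ^ k : (PowerSeries K)ˣ) : PowerSeries K) *
      pexp (l • S J)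

lemma map_pexp' {K : Type*} [Field K] [CharZero K] (f : K →+* K) (g : PowerSeries K) :
    map f (pexp g) = pexp (map f g) := by
  ext n
  simp only [pexp, pcomp, coeff_map, coeff_mk, map_sum, map_mul, coeff_exp,
    eq_ratCast, map_ratCast, ← map_pow, coeff_map]

lemma map_units_zpow' {K : Type*} [Field K] (f : K →+* K) (u u' : (PowerSeries K)ˣ)
    (h : map f (u : PowerSeries K) = u') (e : ℤ) :
    map f ((u ^ e : (PowerSeries K)ˣ) : PowerSeries K)
      = ((u' ^ e : (PowerSeries K)ˣ) : PowerSeries K) := by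
  have hu : Units.map (PowerSeries.map f).toMonoidHom u = u' := Units.ext (by simpa using h)
  calc map f ((u ^ e : (PowerSeries K)ˣ) : PowerSeries K)
      = ((Units.map (PowerSeries.map f).toMonoidHom (u ^ e) : (PowerSeries K)ˣ) : PowerSeries K) :=
        (Units.coe_map _ _).symm
    _ = _ := by rw [map_zpow (Units.map (PowerSeries.map f).toMonoidHom) u e, hu]

lemma Phi3_expand {K : Type*} [Field K] [CharZero K] (ε : K)
    (Y Z : Finset ℕ → (PowerSeries K)ˣ) (S : Finset ℕ → PowerSeries K)
    (χ d e k l : ℤ) :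
    Phi3 ε Y Z S χ d e k l =
      C ((-1 : K) ^ ((0:ℤ) * χ) * ε ^ ((0:ℤ) * d)) * ↑(Y ∅ ^ e) * ↑(Z ∅ ^ k) * pexp (l • S ∅)
    + C ((-1 : K) ^ ((1:ℤ) * χ) * ε ^ ((1:ℤ) * d)) * ↑(Y {1} ^ e) * ↑(Z {1} ^ k) * pexp (l • S {1})
    + C ((-1 : K) ^ ((1:ℤ) * χ) * ε ^ ((2:ℤ) * d)) * ↑(Y {2} ^ e) * ↑(Z {2} ^ k) * pexp (l • S {2})
    + C ((-1 : K) ^ ((2:ℤ) * χ) * ε ^ ((3:ℤ) * d)) * ↑(Y {1,2} ^ e) * ↑(Z {1,2} ^ k) * pexp (l • S {1,2}) := by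
  rw [Phi3, show ({1,2} : Finset ℕ).powerset = {∅, {1}, {2}, {1,2}} from by decide,
    Finset.sum_insert (by decide), Finset.sum_insert (by decide),
    Finset.sum_insert (by decide), Finset.sum_singleton]
  norm_num
  ring

/-- Generic invariance step. -/
lemma Phi3_map_eq {K : Type*} [Field K] [CharZero K] (f : K →+* K) (ε : K)
    (hε3 : ε ^ 3 = 1) (hfε : f ε = ε ^ 2)
    (Y Z : Finset ℕ → (PowerSeries K)ˣ) (S : Finset ℕ → PowerSeries K)
    (J0 J3 : Finset ℕ)
    (h03 : (J0 = ∅ ∧ J3 = ({1,2} : Finset ℕ)) ∨ (J0 = ({1,2} : Finset ℕ) ∧ J3 = ∅))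
    (hY0 : map f (Y ∅ : PowerSeries K) = Y J0)
    (hY1 : map f (Y {1} : PowerSeries K) = Y {2})
    (hY2 : map f (Y {2} : PowerSeries K) = Y {1})
    (hY3 : map f (Y {1,2} : PowerSeries K) = Y J3)
    (hZ0 : map f (Z ∅ : PowerSeries K) = Z J0)
    (hZ1 : map f (Z {1} : PowerSeries K) = Z {2})
    (hZ2 : map f (Z {2} : PowerSeries K) = Z {1})
    (hZ3 : map f (Z {1,2} : PowerSeries K) = Z J3)
    (hS0 : map f (S ∅) = S J0)
    (hS1 : map f (S {1}) = S {2})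
    (hS2 : map f (S {2}) = S {1})
    (hS3 : map f (S {1,2}) = S J3)
    (χ d e k l : ℤ) :
    map f (Phi3 ε Y Z S χ d e k l) = Phi3 ε Y Z S χ d e k l := by
  have hne : ε ≠ 0 := by
    intro h; rw [h] at hε3; simp at hε3
  have hε3' : ε ^ (3:ℤ) = 1 := by
    rw [show (3:ℤ) = ((3:ℕ):ℤ) from by norm_num, zpow_natCast, hε3]
  have key : ∀ m : ℤ, f (ε ^ m) = ε ^ (2 * m) := by
    intro m
    rw [map_zpow₀, hfε, ← zpow_natCast ε 2, ← zpow_mul]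
    norm_num
  have per : ∀ m : ℤ, ε ^ (3 * m) = 1 := by
    intro m; rw [zpow_mul, hε3', one_zpow]
  have fneg : ∀ m : ℤ, f ((-1 : K) ^ m) = (-1 : K) ^ m := by
    intro m; rw [map_zpow₀, map_neg, map_one]
  have m1 : ∀ m : ℤ, (-1 : K) ^ (2 * m) = 1 := by
    intro m; rw [zpow_mul, show ((-1:K) ^ (2:ℤ)) = 1 from by norm_num, one_zpow]
  have k0 : f (ε ^ ((0:ℤ) * d)) = ε ^ ((0:ℤ) * d) := by rw [key]; congr 1; ring
  have k1 : f (ε ^ ((1:ℤ) * d)) = ε ^ ((2:ℤ) * d) := by rw [key]; congr 1; ring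
  have k2 : f (ε ^ ((2:ℤ) * d)) = ε ^ ((1:ℤ) * d) := by
    rw [key, show (2:ℤ) * (2 * d) = 3 * d + 1 * d from by ring, zpow_add₀ hne, per, one_mul]
  have k3 : f (ε ^ ((3:ℤ) * d)) = ε ^ ((3:ℤ) * d) := by
    rw [key, show (2:ℤ) * (3 * d) = 3 * (2 * d) from by ring, per, per]
  have n0 : f ((-1 : K) ^ ((0:ℤ) * χ)) = (-1 : K) ^ ((0:ℤ) * χ) := fneg _
  have n1 : f ((-1 : K) ^ ((1:ℤ) * χ)) = (-1 : K) ^ ((1:ℤ) * χ) := fneg _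
  have n2 : f ((-1 : K) ^ ((2:ℤ) * χ)) = (-1 : K) ^ ((2:ℤ) * χ) := fneg _
  have hY0' := map_units_zpow' f _ _ hY0 e
  have hY1' := map_units_zpow' f _ _ hY1 e
  have hY2' := map_units_zpow' f _ _ hY2 e
  have hY3' := map_units_zpow' f _ _ hY3 e
  have hZ0' := map_units_zpow' f _ _ hZ0 k
  have hZ1' := map_units_zpow' f _ _ hZ1 k
  have hZ2' := map_units_zpow' f _ _ hZ2 k
  have hZ3' := map_units_zpow' f _ _ hZ3 k
  have p0 : map f (pexp (l • S ∅)) = pexp (l • S J0) := by rw [map_pexp', map_zsmul, hS0]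
  have p1 : map f (pexp (l • S {1})) = pexp (l • S {2}) := by rw [map_pexp', map_zsmul, hS1]
  have p2 : map f (pexp (l • S {2})) = pexp (l • S {1}) := by rw [map_pexp', map_zsmul, hS2]
  have p3 : map f (pexp (l • S {1,2})) = pexp (l • S J3) := by rw [map_pexp', map_zsmul, hS3]
  rw [Phi3_expand]
  simp only [map_add, map_mul, map_C, n0, n1, n2, k0, k1, k2, k3,
    hY0', hY1', hY2', hY3', hZ0', hZ1', hZ2', hZ3', p0, p1, p2, p3]
  simp only [m1 χ, per d, zero_mul, zpow_zero, one_mul, map_one]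
  rcases h03 with ⟨h0, h3⟩ | ⟨h0, h3⟩ <;> subst h0 <;> subst h3 <;> ring

/-- Rank-3 Galois invariance: if `σ`, `τ` act on the universal series `Y_J`, `Z_J`, `S_J`
by the conjectured permutations, then `Φ₀` is fixed by `σ` and `τ`; in particular when
the fixed field of `{σ,τ}` is `ℚ`, all coefficients of `Φ₀` are rational. -/
theorem rank_three_galois_invariance {K : Type*} [Field K] [CharZero K]
    (σ τ : K ≃+* K) (ω i : K)
    (hω : ω ^ 2 = 3) (hi : i ^ 2 = -1)
    (hσω : σ ω = -ω) (hσi : σ i = i) (hτω : τ ω = ω) (hτi : τ i = -i)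
    (Y Z : Finset ℕ → (PowerSeries K)ˣ) (S : Finset ℕ → PowerSeries K)
    (hS0 : ∀ J ∈ ({1, 2} : Finset ℕ).powerset, constantCoeff (S J) = 0)
    (hYσ₁ : map (σ : K →+* K) (Y ∅ : PowerSeries K) = Y {1, 2})
    (hYσ₂ : map (σ : K →+* K) (Y {1, 2} : PowerSeries K) = Y ∅)
    (hYσ₃ : map (σ : K →+* K) (Y {1} : PowerSeries K) = Y {2})
    (hYσ₄ : map (σ : K →+* K) (Y {2} : PowerSeries K) = Y {1})
    (hYτ₁ : map (τ : K →+* K) (Y ∅ : PowerSeries K) = Y ∅)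
    (hYτ₂ : map (τ : K →+* K) (Y {1, 2} : PowerSeries K) = Y {1, 2})
    (hYτ₃ : map (τ : K →+* K) (Y {1} : PowerSeries K) = Y {2})
    (hYτ₄ : map (τ : K →+* K) (Y {2} : PowerSeries K) = Y {1})
    (hZσ₁ : map (σ : K →+* K) (Z ∅ : PowerSeries K) = Z {1, 2})
    (hZσ₂ : map (σ : K →+* K) (Z {1, 2} : PowerSeries K) = Z ∅)
    (hZσ₃ : map (σ : K →+* K) (Z {1} : PowerSeries K) = Z {2})
    (hZσ₄ : map (σ : K →+* K) (Z {2} : PowerSeries K) = Z {1})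
    (hZτ₁ : map (τ : K →+* K) (Z ∅ : PowerSeries K) = Z ∅)
    (hZτ₂ : map (τ : K →+* K) (Z {1, 2} : PowerSeries K) = Z {1, 2})
    (hZτ₃ : map (τ : K →+* K) (Z {1} : PowerSeries K) = Z {2})
    (hZτ₄ : map (τ : K →+* K) (Z {2} : PowerSeries K) = Z {1})
    (hSσ₁ : map (σ : K →+* K) (S ∅) = S {1, 2})
    (hSσ₂ : map (σ : K →+* K) (S {1, 2}) = S ∅)
    (hSσ₃ : map (σ : K →+* K) (S {1}) = S {2})
    (hSσ₄ : map (σ : K →+* K) (S {2}) = S {1})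
    (hSτ₁ : map (τ : K →+* K) (S ∅) = S ∅)
    (hSτ₂ : map (τ : K →+* K) (S {1, 2}) = S {1, 2})
    (hSτ₃ : map (τ : K →+* K) (S {1}) = S {2})
    (hSτ₄ : map (τ : K →+* K) (S {2}) = S {1})
    (χ d e k l : ℤ) :
    map (σ : K →+* K) (Phi3 ((-1 + ω * i) / 2) Y Z S χ d e k l) =
        Phi3 ((-1 + ω * i) / 2) Y Z S χ d e k l ∧
    map (τ : K →+* K) (Phi3 ((-1 + ω * i) / 2) Y Z S χ d e k l) =
        Phi3 ((-1 + ω * i) / 2) Y Z S χ d e k l ∧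
    ((∀ x : K, σ x = x → τ x = x → ∃ a : ℚ, x = (a : K)) →
      ∀ n : ℕ, ∃ a : ℚ, coeff n (Phi3 ((-1 + ω * i) / 2) Y Z S χ d e k l) = (a : K)) := by

  set ε : K := (-1 + ω * i) / 2 with hε
  have h3 : (ω * i) ^ 2 = -3 := by rw [mul_pow, hω, hi]; ring
  have hε3 : ε ^ 3 = 1 := by
    rw [hε]; linear_combination ((ω * i - 3) / 8) * h3
  have hσε : σ ε = ε ^ 2 := by
    rw [hε, map_div₀, map_add, map_mul, hσω, hσi, map_neg, map_one, map_ofNat]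
    linear_combination (-(1:K)/4) * h3
  have hτε : τ ε = ε ^ 2 := by
    rw [hε, map_div₀, map_add, map_mul, hτω, hτi, map_neg, map_one, map_ofNat]
    linear_combination (-(1:K)/4) * h3
  have hσΦ : map (σ : K →+* K) (Phi3 ε Y Z S χ d e k l) = Phi3 ε Y Z S χ d e k l :=
    Phi3_map_eq (σ : K →+* K) ε hε3 hσε Y Z S {1, 2} ∅ (Or.inr ⟨rfl, rfl⟩)
      hYσ₁ hYσ₃ hYσ₄ hYσ₂ hZσ₁ hZσ₃ hZσ₄ hZσ₂ hSσ₁ hSσ₃ hSσ₄ hSσ₂ χ d e k l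
  have hτΦ : map (τ : K →+* K) (Phi3 ε Y Z S χ d e k l) = Phi3 ε Y Z S χ d e k l :=
    Phi3_map_eq (τ : K →+* K) ε hε3 hτε Y Z S ∅ {1, 2} (Or.inl ⟨rfl, rfl⟩)
      hYτ₁ hYτ₃ hYτ₄ hYτ₂ hZτ₁ hZτ₃ hZτ₄ hZτ₂ hSτ₁ hSτ₃ hSτ₄ hSτ₂ χ d e k l
  refine ⟨hσΦ, hτΦ, fun hfix n => ?_⟩
  have h1 : σ (coeff n (Phi3 ε Y Z S χ d e k l)) = coeff n (Phi3 ε Y Z S χ d e k l) := by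
    conv_rhs => rw [← hσΦ]
    rw [coeff_map]; rfl
  have h2 : τ (coeff n (Phi3 ε Y Z S χ d e k l)) = coeff n (Phi3 ε Y Z S χ d e k l) := by
    conv_rhs => rw [← hτΦ]
    rw [coeff_map]; rfl
  exact hfix _ h1 h2
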